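/- Let W ⊆ E be a stable subspace such that ker(z) ⊆ W ⊆ im(z). Then z maps (z^{-1}W) ∩ W^⊥ linearly isomorphically onto W ∩ (zW)^⊥, and moreover C(zv) = C(v) for every v ∈ (z^{-1}W) ∩ W^⊥ (i.e. the maps z and C from (z^{-1}W) ∩ W^⊥ and the map C from W ∩ (zW)^⊥ to ℂ² form a commuting triangle). -/

import Mathlib

open scoped ComplexInnerProductSpace

noncomputable section

abbrev E (N : ℕ) := EuclideanSpace ℂ (Fin N ⊕ Fin N)

def zmap (N : ℕ) : E N →ₗ[ℂ] E N where
  toFun v := WithLp.toLp 2 fun i =>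
    match i with
    | Sum.inl j => if h : (j : ℕ) + 1 < N then v (Sum.inl ⟨(j : ℕ) + 1, h⟩) else 0
    | Sum.inr j => if h : (j : ℕ) + 1 < N then v (Sum.inr ⟨(j : ℕ) + 1, h⟩) else 0
  map_add' u v := by
    ext i
    rcases i with j | j <;> simp only [PiLp.add_apply, PiLp.toLp_apply] <;> split <;> simp
  map_smul' c v := by
    ext i
    rcases i with j | j <;> simp only [PiLp.smul_apply, PiLp.toLp_apply, RingHom.id_apply, smul_eq_mul] <;>
      split <;> simp

def Cmap (N : ℕ) : E N →ₗ[ℂ] EuclideanSpace ℂ (Fin 2) where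
  toFun v := WithLp.toLp 2 fun i => if i = 0 then ∑ j : Fin N, v (Sum.inl j) else ∑ j : Fin N, v (Sum.inr j)
  map_add' u v := by
    ext i
    by_cases h : i = (0 : Fin 2) <;> simp [h, PiLp.add_apply, Finset.sum_add_distrib]
  map_smul' c v := by
    ext i
    by_cases h : i = (0 : Fin 2) <;> simp [h, PiLp.smul_apply, Finset.mul_sum]

/-- `Ym N m` : complete flags `0 = L_0 ⊊ L_1 ⊊ … ⊊ L_m` of `z`-stable subspaces of `E`
with `dim L_j = j`.  A tuple `(L_1,…,L_m) ∈ Y_m` is encoded as the function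
`L : Fin (m+1) → Submodule ℂ (E N)` with the convention `L 0 = 0`. -/
def Ym (N m : ℕ) : Set (Fin (m + 1) → Submodule ℂ (E N)) :=
  {L | L 0 = ⊥ ∧ StrictMono L ∧ (∀ j : Fin (m + 1), Module.finrank ℂ (L j) = (j : ℕ)) ∧
    ∀ j : Fin (m + 1), (L j).map (zmap N) ≤ L j}

/-- The map `φ_m`, in coordinates: `φ_m(L)_j = C(L_{j+1} ∩ L_j^⊥)` (0-based `j`),
i.e. the tuple `(C(L_1), C(L_2 ∩ L_1^⊥), …, C(L_m ∩ L_{m-1}^⊥))`. -/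
def phiRaw (N m : ℕ) (L : Fin (m + 1) → Submodule ℂ (E N)) :
    Fin m → Submodule ℂ (EuclideanSpace ℂ (Fin 2)) :=
  fun j => ((L j.succ) ⊓ (L j.castSucc)ᗮ).map (Cmap N)

/-- `X_{m,i} = {(L_1,…,L_m) ∈ Y_m : L_{i+1} = z^{-1}(L_{i-1})}` (with `L_0 = 0`). -/
def Xmi (N m i : ℕ) : Set (Fin (m + 1) → Submodule ℂ (E N)) :=
  {L | L ∈ Ym N m ∧ ∀ (h : i + 1 < m + 1) (h' : i - 1 < m + 1),
    L ⟨i + 1, h⟩ = (L ⟨i - 1, h'⟩).comap (zmap N)}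

/-- `A_{m,i} = {(l_1,…,l_m) ∈ (ℙ¹)^m : l_{i+1} = l_i^⊥}`; a point of `(ℙ¹)^m` is encoded
as a tuple of rank-one subspaces of `ℂ²`, the line `l_k` sitting at 0-based index `k-1`. -/
def Ami (m i : ℕ) : Set (Fin m → Submodule ℂ (EuclideanSpace ℂ (Fin 2))) :=
  {l | (∀ j, Module.finrank ℂ (l j) = 1) ∧
    ∀ (h : i < m) (h' : i - 1 < m), l ⟨i, h⟩ = (l ⟨i - 1, h'⟩)ᗮ}

/-- `q_{m,i}(L_1,…,L_m) = (L_1,…,L_{i-1}, zL_{i+2},…,zL_m)`. -/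
def qRaw (N m i : ℕ) (hm : 2 ≤ m) (L : Fin (m + 1) → Submodule ℂ (E N)) :
    Fin (m - 2 + 1) → Submodule ℂ (E N) :=
  fun j =>
    if (j : ℕ) < i then L ⟨(j : ℕ), by have := j.isLt; omega⟩
    else (L ⟨(j : ℕ) + 2, by have := j.isLt; omega⟩).map (zmap N)

/-- The forgetful map `g_{m,i}(l_1,…,l_m) = (l_1,…,l_{i-1}, l_{i+2},…,l_m)`. -/
def gRaw (m i : ℕ) (l : Fin m → Submodule ℂ (EuclideanSpace ℂ (Fin 2))) :
    Fin (m - 2) → Submodule ℂ (EuclideanSpace ℂ (Fin 2)) :=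
  fun k =>
    if (k : ℕ) + 1 < i then l ⟨(k : ℕ), by have := k.isLt; omega⟩
    else l ⟨(k : ℕ) + 2, by have := k.isLt; omega⟩

/-- The involution `I_{2n}` of `(ℙ¹)^m`: `l_j ↦ l_j` for `j` odd, `l_j ↦ l_j^⊥` for `j` even
(the line `l_j` sits at 0-based index `j-1`). -/
def Imap (m : ℕ) (l : Fin m → Submodule ℂ (EuclideanSpace ℂ (Fin 2))) :
    Fin m → Submodule ℂ (EuclideanSpace ℂ (Fin 2)) :=
  fun k => if (k : ℕ) % 2 = 0 then l k else (l k)ᗮ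

/-- A crossingless matching of the `2n` points `{1,…,2n}`: a partition of `{1,…,2n}` into
`n` pairs (each pair recorded as `(i,j)` with `i < j`) such that there is no quadruple
`i < j < k < l` with `(i,k)` and `(j,l)` paired. -/
structure CrossinglessMatching (n : ℕ) where
  pairs : Finset (ℕ × ℕ)
  card_eq : pairs.card = n
  lt : ∀ p ∈ pairs, p.1 < p.2
  mem_range : ∀ p ∈ pairs, 1 ≤ p.1 ∧ p.2 ≤ 2 * n
  cover : ∀ k, 1 ≤ k → k ≤ 2 * n → ∃! p, p ∈ pairs ∧ (p.1 = k ∨ p.2 = k)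
  noncross : ∀ i j k l : ℕ, i < j → j < k → k < l → (i, k) ∈ pairs → (j, l) ∉ pairs

open Fin.NatCast in
/-- `{(L_1,…,L_m) ∈ Y_m : L_{s_a(j)} = z^{-d_a(j)} L_{j-1} for all j ∈ O_a}`, where for a
pair `(i,j)` of the matching, `s_a(i) = j`, `d_a(i) = (j-i+1)/2`, and `z^{-d}` is the
`d`-fold preimage under `z`. -/
def KaSet (N m : ℕ) (pairs : Finset (ℕ × ℕ)) : Set (Fin (m + 1) → Submodule ℂ (E N)) :=
  {L | L ∈ Ym N m ∧ ∀ p ∈ pairs,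
    L ((p.2 : Fin (m + 1))) =
      (L ((p.1 - 1 : ℕ) : Fin (m + 1))).comap ((zmap N) ^ ((p.2 - p.1 + 1) / 2))}

/-- `S_a = {(l_1,…,l_{2n}) ∈ (ℙ¹)^{2n} : l_{s_a(j)} = l_j ∀ j ∈ O_a}` (0-based indexing, so
`l_k` sits at index `k-1`). -/
def SaSet (m : ℕ) (pairs : Finset (ℕ × ℕ)) :
    Set (Fin m → Submodule ℂ (EuclideanSpace ℂ (Fin 2))) :=
  {l | (∀ j, Module.finrank ℂ (l j) = 1) ∧
    ∀ p ∈ pairs, ∀ (h2 : p.2 - 1 < m) (h1 : p.1 - 1 < m), l ⟨p.2 - 1, h2⟩ = l ⟨p.1 - 1, h1⟩}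

/-- `T_a = {(l_1,…,l_{2n}) ∈ (ℙ¹)^{2n} : l_{s_a(j)} = l_j^⊥ ∀ j ∈ O_a}`. -/
def TaSet (m : ℕ) (pairs : Finset (ℕ × ℕ)) :
    Set (Fin m → Submodule ℂ (EuclideanSpace ℂ (Fin 2))) :=
  {l | (∀ j, Module.finrank ℂ (l j) = 1) ∧
    ∀ p ∈ pairs, ∀ (h2 : p.2 - 1 < m) (h1 : p.1 - 1 < m), l ⟨p.2 - 1, h2⟩ = (l ⟨p.1 - 1, h1⟩)ᗮ}

section Aux

open ComplexConjugate Module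

lemma zmap_apply_inl {N : ℕ} (v : E N) (j : Fin N) :
    zmap N v (Sum.inl j) =
      if h : (j : ℕ) + 1 < N then v (Sum.inl ⟨(j : ℕ) + 1, h⟩) else 0 := rfl

lemma zmap_apply_inr {N : ℕ} (v : E N) (j : Fin N) :
    zmap N v (Sum.inr j) =
      if h : (j : ℕ) + 1 < N then v (Sum.inr ⟨(j : ℕ) + 1, h⟩) else 0 := rfl

lemma cmap_apply {N : ℕ} (v : E N) (i : Fin 2) :
    Cmap N v i = if i = 0 then ∑ j : Fin N, v (Sum.inl j)
      else ∑ j : Fin N, v (Sum.inr j) := rfl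

lemma shift_sum {N : ℕ} (hN : 0 < N) (G : Fin N → ℂ) :
    ∑ j : Fin N, (if h : (j : ℕ) + 1 < N then G ⟨(j : ℕ) + 1, h⟩ else 0)
      = ∑ j : Fin N, G j - G ⟨0, hN⟩ := by
  obtain ⟨n, rfl⟩ : ∃ n, N = n + 1 := ⟨N - 1, by omega⟩
  rw [Fin.sum_univ_castSucc
      (f := fun j : Fin (n+1) => if h : (j : ℕ) + 1 < n + 1 then G ⟨(j : ℕ) + 1, h⟩ else 0),
    Fin.sum_univ_succ (f := G)]
  have h1 : ∀ i : Fin n,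
      (if h : ((i.castSucc : Fin (n+1)) : ℕ) + 1 < n + 1
        then G ⟨((i.castSucc : Fin (n+1)) : ℕ) + 1, h⟩ else 0) = G i.succ := by
    intro i
    rw [dif_pos (by simpa using i.isLt)]
    rfl
  rw [Finset.sum_congr rfl (fun i _ => h1 i)]
  have h2 : (if h : ((Fin.last n : Fin (n+1)) : ℕ) + 1 < n + 1
      then G ⟨((Fin.last n : Fin (n+1)) : ℕ) + 1, h⟩ else 0) = 0 := by
    rw [dif_neg (by simp)]
  rw [h2]
  have h3 : G ⟨0, hN⟩ = G 0 := rfl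
  rw [h3]
  ring

lemma inner_zmap_zmap {N : ℕ} (hN : 0 < N) (u v : E N)
    (h1 : v (Sum.inl ⟨0, hN⟩) = 0) (h2 : v (Sum.inr ⟨0, hN⟩) = 0) :
    ⟪zmap N u, zmap N v⟫ = ⟪u, v⟫ := by
  simp only [PiLp.inner_apply, RCLike.inner_apply']
  rw [Fintype.sum_sum_type, Fintype.sum_sum_type]
  have A : ∀ j : Fin N, (starRingEnd ℂ) (zmap N u (Sum.inl j)) * zmap N v (Sum.inl j)
      = if h : (j : ℕ) + 1 < N
          then (starRingEnd ℂ) (u (Sum.inl ⟨(j : ℕ) + 1, h⟩)) * v (Sum.inl ⟨(j : ℕ) + 1, h⟩)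
          else 0 := by
    intro j; rw [zmap_apply_inl, zmap_apply_inl]; split <;> simp
  have B : ∀ j : Fin N, (starRingEnd ℂ) (zmap N u (Sum.inr j)) * zmap N v (Sum.inr j)
      = if h : (j : ℕ) + 1 < N
          then (starRingEnd ℂ) (u (Sum.inr ⟨(j : ℕ) + 1, h⟩)) * v (Sum.inr ⟨(j : ℕ) + 1, h⟩)
          else 0 := by
    intro j; rw [zmap_apply_inr, zmap_apply_inr]; split <;> simp
  have SL : ∑ j : Fin N, (if h : (j : ℕ) + 1 < N
        then (starRingEnd ℂ) (u (Sum.inl ⟨(j : ℕ) + 1, h⟩)) * v (Sum.inl ⟨(j : ℕ) + 1, h⟩)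
        else 0)
      = ∑ j : Fin N, (starRingEnd ℂ) (u (Sum.inl j)) * v (Sum.inl j)
        - (starRingEnd ℂ) (u (Sum.inl ⟨0, hN⟩)) * v (Sum.inl ⟨0, hN⟩) :=
    shift_sum hN (fun j => (starRingEnd ℂ) (u (Sum.inl j)) * v (Sum.inl j))
  have SR : ∑ j : Fin N, (if h : (j : ℕ) + 1 < N
        then (starRingEnd ℂ) (u (Sum.inr ⟨(j : ℕ) + 1, h⟩)) * v (Sum.inr ⟨(j : ℕ) + 1, h⟩)
        else 0)
      = ∑ j : Fin N, (starRingEnd ℂ) (u (Sum.inr j)) * v (Sum.inr j)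
        - (starRingEnd ℂ) (u (Sum.inr ⟨0, hN⟩)) * v (Sum.inr ⟨0, hN⟩) :=
    shift_sum hN (fun j => (starRingEnd ℂ) (u (Sum.inr j)) * v (Sum.inr j))
  rw [Finset.sum_congr rfl (fun j _ => A j), Finset.sum_congr rfl (fun j _ => B j),
    SL, SR, h1, h2]
  ring

lemma cmap_zmap {N : ℕ} (hN : 0 < N) (v : E N)
    (h1 : v (Sum.inl ⟨0, hN⟩) = 0) (h2 : v (Sum.inr ⟨0, hN⟩) = 0) :
    Cmap N (zmap N v) = Cmap N v := by
  ext i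
  rw [cmap_apply, cmap_apply]
  have A : ∑ j : Fin N, zmap N v (Sum.inl j) = ∑ j : Fin N, v (Sum.inl j) := by
    rw [Finset.sum_congr rfl (fun j _ => zmap_apply_inl v j),
      shift_sum hN (fun j => v (Sum.inl j)), h1, sub_zero]
  have B : ∑ j : Fin N, zmap N v (Sum.inr j) = ∑ j : Fin N, v (Sum.inr j) := by
    rw [Finset.sum_congr rfl (fun j _ => zmap_apply_inr v j),
      shift_sum hN (fun j => v (Sum.inr j)), h2, sub_zero]
  split <;> [exact A; exact B]

lemma single_zero_mem_ker_inl {N : ℕ} (hN : 0 < N) :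
    EuclideanSpace.single (Sum.inl (⟨0, hN⟩ : Fin N)) (1 : ℂ) ∈ LinearMap.ker (zmap N) := by
  rw [LinearMap.mem_ker]
  ext i
  rcases i with j | j
  · rw [zmap_apply_inl]
    split
    · simp [EuclideanSpace.single_apply, Fin.ext_iff]
    · rfl
  · rw [zmap_apply_inr]
    split
    · simp [EuclideanSpace.single_apply]
    · rfl

lemma single_zero_mem_ker_inr {N : ℕ} (hN : 0 < N) :
    EuclideanSpace.single (Sum.inr (⟨0, hN⟩ : Fin N)) (1 : ℂ) ∈ LinearMap.ker (zmap N) := by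
  rw [LinearMap.mem_ker]
  ext i
  rcases i with j | j
  · rw [zmap_apply_inl]
    split
    · simp [EuclideanSpace.single_apply]
    · rfl
  · rw [zmap_apply_inr]
    split
    · simp [EuclideanSpace.single_apply, Fin.ext_iff]
    · rfl

/-- rank-nullity for a restriction whose domain contains the kernel -/
lemma finrank_map_add_ker {N : ℕ} (p : Submodule ℂ (E N))
    (hp : LinearMap.ker (zmap N) ≤ p) :
    finrank ℂ (p.map (zmap N)) + finrank ℂ (LinearMap.ker (zmap N)) = finrank ℂ p := by
  have h := LinearMap.finrank_range_add_finrank_ker ((zmap N).domRestrict p)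
  rw [LinearMap.range_domRestrict, LinearMap.ker_domRestrict] at h
  rwa [(Submodule.comapSubtypeEquivOfLe hp).finrank_eq] at h

end Aux

theorem zmap_bijOn_and_commutes (N : ℕ) (hN : 1 ≤ N)
    (W : Submodule ℂ (E N)) (hstab : W.map (zmap N) ≤ W)
    (hker : LinearMap.ker (zmap N) ≤ W) (him : W ≤ LinearMap.range (zmap N)) :
    Set.BijOn (zmap N) (↑(W.comap (zmap N) ⊓ Wᗮ) : Set (E N))
      (↑(W ⊓ (W.map (zmap N))ᗮ) : Set (E N)) ∧
    ∀ v ∈ W.comap (zmap N) ⊓ Wᗮ, Cmap N ((zmap N) v) = Cmap N v := by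
  classical
  have hN0 : 0 < N := hN
  have hv0 : ∀ v ∈ Wᗮ, v (Sum.inl (⟨0, hN0⟩ : Fin N)) = 0 ∧
      v (Sum.inr (⟨0, hN0⟩ : Fin N)) = 0 := by
    intro v hv
    constructor
    · have h := (Submodule.mem_orthogonal W v).mp hv _ (hker (single_zero_mem_ker_inl hN0))
      rwa [EuclideanSpace.inner_single_left, map_one, one_mul] at h
    · have h := (Submodule.mem_orthogonal W v).mp hv _ (hker (single_zero_mem_ker_inr hN0))
      rwa [EuclideanSpace.inner_single_left, map_one, one_mul] at h
  -- maps-to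
  have hmaps : ∀ v ∈ W.comap (zmap N) ⊓ Wᗮ, zmap N v ∈ W ⊓ (W.map (zmap N))ᗮ := by
    intro v hv
    obtain ⟨hv1, hv2⟩ := Submodule.mem_inf.mp hv
    refine Submodule.mem_inf.mpr ⟨hv1, (Submodule.mem_orthogonal _ _).mpr ?_⟩
    rintro u hu
    obtain ⟨w, hw, rfl⟩ := Submodule.mem_map.mp hu
    rw [inner_zmap_zmap hN0 w v (hv0 v hv2).1 (hv0 v hv2).2]
    exact (Submodule.mem_orthogonal W v).mp hv2 w hw
  -- injectivity
  have hdisj : ∀ x ∈ W.comap (zmap N) ⊓ Wᗮ, zmap N x = 0 → x = 0 := by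
    intro x hx h0
    have hxW : x ∈ W := hker (LinearMap.mem_ker.mpr h0)
    have hx2 : x ∈ W ⊓ Wᗮ :=
      Submodule.mem_inf.mpr ⟨hxW, (Submodule.mem_inf.mp hx).2⟩
    rw [Submodule.inf_orthogonal_eq_bot] at hx2
    exact (Submodule.mem_bot ℂ).mp hx2
  -- dimension bookkeeping
  have hcomap : Module.finrank ℂ (W.comap (zmap N)) =
      Module.finrank ℂ W + Module.finrank ℂ (LinearMap.ker (zmap N)) := by
    have hker' : LinearMap.ker (zmap N) ≤ W.comap (zmap N) := by
      intro x hx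
      have : zmap N x = 0 := LinearMap.mem_ker.mp hx
      simp [Submodule.mem_comap, this]
    have h := finrank_map_add_ker (W.comap (zmap N)) hker'
    rw [Submodule.map_comap_eq_self him] at h
    omega
  have hT_rank : Module.finrank ℂ (W ⊓ (W.map (zmap N))ᗮ : Submodule ℂ (E N)) =
      Module.finrank ℂ (LinearMap.ker (zmap N)) := by
    have h := Submodule.finrank_add_inf_finrank_orthogonal (K₁ := W.map (zmap N))
      (K₂ := W) hstab
    have h2 := finrank_map_add_ker W hker
    have h3 : (W ⊓ (W.map (zmap N))ᗮ : Submodule ℂ (E N)) = (W.map (zmap N))ᗮ ⊓ W :=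
      inf_comm _ _
    rw [h3]
    omega
  have hS_rank : Module.finrank ℂ (LinearMap.ker (zmap N)) ≤
      Module.finrank ℂ (W.comap (zmap N) ⊓ Wᗮ : Submodule ℂ (E N)) := by
    have h := Submodule.finrank_sup_add_finrank_inf_eq (W.comap (zmap N)) Wᗮ
    have horth := Submodule.finrank_add_finrank_orthogonal (K := W)
    have htop : Module.finrank ℂ (W.comap (zmap N) ⊔ Wᗮ : Submodule ℂ (E N)) ≤
        Module.finrank ℂ (E N) := Submodule.finrank_le _
    rw [hcomap] at h
    omega
  have hmapS : Module.finrank ℂ ((W.comap (zmap N) ⊓ Wᗮ).map (zmap N)) =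
      Module.finrank ℂ (W.comap (zmap N) ⊓ Wᗮ : Submodule ℂ (E N)) := by
    have h := LinearMap.finrank_range_add_finrank_ker
      ((zmap N).domRestrict (W.comap (zmap N) ⊓ Wᗮ))
    have hker0 : LinearMap.ker ((zmap N).domRestrict (W.comap (zmap N) ⊓ Wᗮ)) = ⊥ := by
      rw [eq_bot_iff]
      rintro ⟨x, hx⟩ hx0
      have hx0' : zmap N x = 0 := by
        simpa [LinearMap.domRestrict_apply] using (LinearMap.mem_ker.mp hx0)
      have : x = 0 := hdisj x hx hx0'
      simp only [Submodule.mem_bot]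
      exact Subtype.ext this
    rw [LinearMap.range_domRestrict, hker0, finrank_bot, add_zero] at h
    exact h
  have hle : (W.comap (zmap N) ⊓ Wᗮ).map (zmap N) ≤ W ⊓ (W.map (zmap N))ᗮ := by
    rintro u hu
    obtain ⟨v, hv, rfl⟩ := Submodule.mem_map.mp hu
    exact hmaps v hv
  have hST : (W.comap (zmap N) ⊓ Wᗮ).map (zmap N) = W ⊓ (W.map (zmap N))ᗮ :=
    Submodule.eq_of_le_of_finrank_le hle (by omega)
  refine ⟨⟨?_, ?_, ?_⟩, ?_⟩
  · intro v hv
    exact hmaps v hv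
  · intro x hx y hy hxy
    have h0 : zmap N (x - y) = 0 := by rw [map_sub, hxy, sub_self]
    have := hdisj (x - y) (Submodule.sub_mem _ hx hy) h0
    exact sub_eq_zero.mp this
  · intro t ht
    have ht' : t ∈ (W.comap (zmap N) ⊓ Wᗮ).map (zmap N) := hST ▸ ht
    obtain ⟨v, hv, rfl⟩ := Submodule.mem_map.mp ht'
    exact ⟨v, hv, rfl⟩
  · intro v hv
    have hv2 : v ∈ Wᗮ := (Submodule.mem_inf.mp hv).2
    exact cmap_zmap hN0 v (hv0 v hv2).1 (hv0 v hv2).2
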